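/- Let B : [0,δ] → M_d(ℝ) be continuous with B(t) symmetric for all t, and let M(t) solve the linear matrix ODE M'(t) = B(t)M(t) with M(0)M(0)ᵀ = A₀ for a positive definite symmetric A₀. If B(t)(M(t)M(t)ᵀ) + (M(t)M(t)ᵀ)B(t) = A'(t) with A(0) = A₀, then M(t)M(t)ᵀ = A(t) for all t. -/

import Mathlib

open Matrix Set

/-- If `M` solves `M' = B M` with `B t` symmetric, `M 0 * (M 0)ᵀ = A 0` with
`A 0` positive definite, and `A` solves `A' = B (M Mᵀ) + (M Mᵀ) B`, then
`M t * (M t)ᵀ = A t` on `[0,δ]`. -/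
theorem mmT_eq_A (d : ℕ) (δ : ℝ) (hδ : 0 < δ)
    (B M A : ℝ → Matrix (Fin d) (Fin d) ℝ)
    (hBcont : ∀ i j, ContinuousOn (fun t => B t i j) (Icc (0:ℝ) δ))
    (hBsymm : ∀ t ∈ Icc (0:ℝ) δ, (B t).IsSymm)
    (hM : ∀ t ∈ Icc (0:ℝ) δ, ∀ i j,
      HasDerivAt (fun s => M s i j) ((B t * M t) i j) t)
    (hA0pos : (A 0).PosDef) (hA0symm : (A 0).IsSymm)
    (hM0 : M 0 * (M 0)ᵀ = A 0)
    (hA : ∀ t ∈ Icc (0:ℝ) δ, ∀ i j,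
      HasDerivAt (fun s => A s i j)
        ((B t * (M t * (M t)ᵀ) + (M t * (M t)ᵀ) * B t) i j) t) :
    ∀ t ∈ Icc (0:ℝ) δ, M t * (M t)ᵀ = A t := by
  -- derivative of (M Mᵀ) entrywise
  have key : ∀ t ∈ Icc (0:ℝ) δ, ∀ i j,
      HasDerivAt (fun s => (M s * (M s)ᵀ) i j)
        ((B t * (M t * (M t)ᵀ) + (M t * (M t)ᵀ) * B t) i j) t := by
    intro t ht i j
    have h1 : HasDerivAt (fun s => ∑ k, M s i k * M s j k)
        (∑ k, ((B t * M t) i k * M t j k + M t i k * (B t * M t) j k)) t :=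
      HasDerivAt.fun_sum (fun k _ => (hM t ht i k).mul (hM t ht j k))
    have hB : ∀ a b, B t a b = B t b a := fun a b => ((hBsymm t ht).apply a b).symm
    have hfun : (fun s => (M s * (M s)ᵀ) i j) = fun s => ∑ k, M s i k * M s j k := by
      funext s; simp [Matrix.mul_apply]
    rw [hfun]
    convert h1 using 1
    simp only [Matrix.add_apply, Matrix.mul_apply, Matrix.transpose_apply,
      Finset.sum_mul, Finset.mul_sum]
    have e1 : ∑ x : Fin d, ∑ l : Fin d, B t i x * (M t x l * M t j l)
        = ∑ l : Fin d, ∑ x : Fin d, B t i x * (M t x l * M t j l) := by rw [Finset.sum_comm]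
    have e2 : ∑ x : Fin d, ∑ l : Fin d, M t i l * M t x l * B t x j
        = ∑ l : Fin d, ∑ x : Fin d, M t i l * M t x l * B t x j := by rw [Finset.sum_comm]
    rw [e1, e2, ← Finset.sum_add_distrib]
    refine Finset.sum_congr rfl fun x _ => ?_
    congr 1
    · exact Finset.sum_congr rfl fun l _ => by ring
    · exact Finset.sum_congr rfl fun l _ => by rw [hB l j]; ring
  intro t ht
  ext i j
  set g : ℝ → ℝ := fun s => (M s * (M s)ᵀ) i j - A s i j with hg
  have hd : ∀ x ∈ Icc (0:ℝ) δ, HasDerivAt g 0 x := by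
    intro x hx
    have := (key x hx i j).sub (hA x hx i j)
    simp at this; exact this
  have hconst : ∀ x ∈ Icc (0:ℝ) δ, g x = g 0 := by
    apply constant_of_has_deriv_right_zero
    · exact fun x hx => ((hd x hx).continuousAt).continuousWithinAt
    · exact fun x hx => ((hd x (Ico_subset_Icc_self hx)).hasDerivWithinAt)
  have h0 : g 0 = 0 := by simp [hg, hM0]
  have h1 := hconst t ht
  rw [h0] at h1
  simp only [hg] at h1
  linarith
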